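/- Define f(x) := (1 + 1/x)(1 − e^{−x}) for x > 0. Then sup_{x > 0} f(x) ≤ 1.3. -/

import Mathlib

open Real

/-- Alternating Taylor lower bound of degree 9 for `exp (-x)` on `x ≥ 0`. -/
lemma exp_neg_ge_poly9 (x : ℝ) (hx : 0 ≤ x) :
    1 - x + x^2/2 - x^3/6 + x^4/24 - x^5/120 + x^6/720 - x^7/5040 + x^8/40320 - x^9/362880
      ≤ Real.exp (-x) := by
  set P : ℝ → ℝ := fun t =>
    1 - t + t^2/2 - t^3/6 + t^4/24 - t^5/120 + t^6/720 - t^7/5040 + t^8/40320 - t^9/362880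
    with hPdef
  have hderiv : ∀ y : ℝ, HasDerivAt (fun t => Real.exp t * P t)
      (-(Real.exp y * y^9 / 362880)) y := by
    intro y
    have h1 : HasDerivAt P
        (-1 + y - y^2/2 + y^3/6 - y^4/24 + y^5/120 - y^6/720 + y^7/5040 - y^8/40320) y := by
      have : HasDerivAt (fun t : ℝ =>
          1 - t + t^2/2 - t^3/6 + t^4/24 - t^5/120 + t^6/720 - t^7/5040 + t^8/40320 - t^9/362880)
          (0 - 1 + (2*y^1)/2 - (3*y^2)/6 + (4*y^3)/24 - (5*y^4)/120 + (6*y^5)/720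
            - (7*y^6)/5040 + (8*y^7)/40320 - (9*y^8)/362880) y := by
        exact ((((((((((hasDerivAt_const y (1:ℝ)).sub (hasDerivAt_id y)).add
          ((hasDerivAt_pow 2 y).div_const 2)).sub ((hasDerivAt_pow 3 y).div_const 6)).add
          ((hasDerivAt_pow 4 y).div_const 24)).sub ((hasDerivAt_pow 5 y).div_const 120)).add
          ((hasDerivAt_pow 6 y).div_const 720)).sub ((hasDerivAt_pow 7 y).div_const 5040)).add
          ((hasDerivAt_pow 8 y).div_const 40320)).sub ((hasDerivAt_pow 9 y).div_const 362880))
      convert this using 1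
      ring
    have h2 : HasDerivAt (fun t => Real.exp t * P t) _ y := (Real.hasDerivAt_exp y).mul h1
    convert h2 using 1
    simp only [hPdef]
    ring
  have anti : AntitoneOn (fun t => Real.exp t * P t) (Set.Ici 0) := by
    apply antitoneOn_of_deriv_nonpos (convex_Ici 0)
    · exact ((Real.continuous_exp.mul (by continuity)).continuousOn)
    · intro y hy
      exact (hderiv y).differentiableAt.differentiableWithinAt
    · intro y hy
      rw [(hderiv y).deriv]
      have hy0 : (0:ℝ) ≤ y := le_of_lt (by simpa using hy)
      have : 0 ≤ Real.exp y * y^9 / 362880 := by positivity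
      linarith
  have key : Real.exp x * P x ≤ 1 := by
    have h := anti (Set.self_mem_Ici) (by exact hx) hx
    simpa [hPdef] using h
  have hpos := Real.exp_pos x
  have : P x ≤ 1 / Real.exp x := (le_div_iff₀ hpos).2 (by linarith [key, mul_comm (Real.exp x) (P x)])
  rwa [one_div, ← Real.exp_neg] at this

/-- Alternating Taylor lower bound of degree 3 for `exp (-x)` on `x ≥ 0`. -/
lemma exp_neg_ge_poly3 (x : ℝ) (hx : 0 ≤ x) :
    1 - x + x^2/2 - x^3/6 ≤ Real.exp (-x) := by
  set P : ℝ → ℝ := fun t => 1 - t + t^2/2 - t^3/6 with hPdef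
  have hderiv : ∀ y : ℝ, HasDerivAt (fun t => Real.exp t * P t)
      (-(Real.exp y * y^3 / 6)) y := by
    intro y
    have h1 : HasDerivAt P (0 - 1 + (2*y^1)/2 - (3*y^2)/6) y :=
      (((hasDerivAt_const y (1:ℝ)).sub (hasDerivAt_id y)).add
        ((hasDerivAt_pow 2 y).div_const 2)).sub ((hasDerivAt_pow 3 y).div_const 6)
    have h2 : HasDerivAt (fun t => Real.exp t * P t) _ y := (Real.hasDerivAt_exp y).mul h1
    convert h2 using 1
    simp only [hPdef]
    ring
  have anti : AntitoneOn (fun t => Real.exp t * P t) (Set.Ici 0) := by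
    apply antitoneOn_of_deriv_nonpos (convex_Ici 0)
    · exact ((Real.continuous_exp.mul (by continuity)).continuousOn)
    · intro y hy
      exact (hderiv y).differentiableAt.differentiableWithinAt
    · intro y hy
      rw [(hderiv y).deriv]
      have hy0 : (0:ℝ) ≤ y := le_of_lt (by simpa using hy)
      have : 0 ≤ Real.exp y * y^3 / 6 := by positivity
      linarith
  have key : Real.exp x * P x ≤ 1 := by
    have h := anti (Set.self_mem_Ici) (by exact hx) hx
    simpa [hPdef] using h
  have hpos := Real.exp_pos x
  have : P x ≤ 1 / Real.exp x := (le_div_iff₀ hpos).2 (by linarith [key, mul_comm (Real.exp x) (P x)])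
  rwa [one_div, ← Real.exp_neg] at this

/-- Let `f x = (1 + 1/x) * (1 - exp (-x))` for `x > 0`. Then `sup_{x>0} f x ≤ 1.3`
(stated equivalently as the pointwise bound, which is equivalent to the bound on the
supremum). -/
theorem stmt_11 : ∀ x : ℝ, 0 < x → (1 + 1 / x) * (1 - Real.exp (-x)) ≤ 1.3 := by
  intro x hx
  have h13 : (1.3 : ℝ) = 13/10 := by norm_num
  rw [h13]
  have hxx : 1 + 1/x = (x+1)/x := by field_simp
  rw [hxx, div_mul_eq_mul_div, div_le_iff₀ hx]
  -- reduces to (x+1) * (1 - exp (-x)) ≤ 13/10 * x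
  rcases le_or_gt x 3 with h3 | h3
  · -- small x : use degree-9 Taylor bound
    have hP := exp_neg_ge_poly9 x hx.le
    have hQ : 0 ≤ 3/10 - x/2 + x^2/3 - x^3/8 + x^4/30 - x^5/144 + x^6/840 - x^7/5760
        + x^8/45360 - x^9/362880 := by
      nlinarith [sq_nonneg (x - 9/5), sq_nonneg (x*(x-9/5)), sq_nonneg (x^2*(x-9/5)),
        sq_nonneg (x^3*(x-9/5)), mul_nonneg hx.le (sub_nonneg.2 h3), sq_nonneg x,
        sq_nonneg (x-3), sq_nonneg (x^2-3)]
    nlinarith [mul_nonneg hx.le hQ, hP, hx]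
  · -- large x
    rcases le_or_gt (10/3) x with h103 | h103
    · -- here 1 - 3/10 * x ≤ 0
      have h1 : (x+1) * Real.exp (-x) ≥ 0 := by positivity
      have h2 : Real.exp (-x) ≤ 1 := by
        rw [Real.exp_le_one_iff]
        linarith
      nlinarith [Real.exp_pos (-x)]
    · -- 3 < x < 10/3 : use exp (-x) ≥ exp (-10/3) ≥ (541/1296)^4
      have hmono : Real.exp (-(10/3 : ℝ)) ≤ Real.exp (-x) :=
        Real.exp_le_exp.2 (by linarith)
      have hsplit : Real.exp (-(10/3 : ℝ)) = (Real.exp (-(5/6 : ℝ)))^4 := by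
        rw [← Real.exp_nat_mul]
        norm_num
      have h56 : (541/1296 : ℝ) ≤ Real.exp (-(5/6 : ℝ)) := by
        have := exp_neg_ge_poly3 (5/6) (by norm_num)
        norm_num at this ⊢
        linarith
      have hpow : ((541:ℝ)/1296)^4 ≤ (Real.exp (-(5/6 : ℝ)))^4 :=
        pow_le_pow_left₀ (by norm_num) h56 4
      have hnum : (1/10 : ℝ) ≤ 4 * ((541:ℝ)/1296)^4 := by norm_num
      have hlow : (1/10 : ℝ) ≤ (x+1) * Real.exp (-x) := by
        have hx4 : (4:ℝ) ≤ x + 1 := by linarith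
        have hE : ((541:ℝ)/1296)^4 ≤ Real.exp (-x) := by
          rw [hsplit] at hmono
          linarith
        have hEpos : (0:ℝ) ≤ Real.exp (-x) := (Real.exp_pos _).le
        nlinarith
      nlinarith [Real.exp_pos (-x)]
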